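/- Let C̄ ≥ 2 and n ≥ 1 be integers, m an arbitrary real, and γ_A, γ_B ∈ (0,1). Then the spectral radius of the 3C̄×3C̄ matrix M^0 defined in the context equals 1 (every complex eigenvalue has modulus ≤ 1 and 1 is an eigenvalue), and the eigenvalue λ = 1 is simple, i.e., it is a root of the characteristic polynomial of M^0 of algebraic multiplicity one. -/

import Mathlib

open Matrix

/-- The 3×3 block `M_1^0`. -/
noncomputable def M1blk (m : ℝ) (n : ℕ) : Matrix (Fin 3) (Fin 3) ℝ :=
  !![0, 0, 0; 0, 1, 0; 2 * m * Real.sqrt n, 0, 0]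

/-- The 3×3 block `M_2^0`. -/
noncomputable def M2blk (m : ℝ) (n : ℕ) : Matrix (Fin 3) (Fin 3) ℝ :=
  !![0, 0, 0; 0, 0, 0; 2 * m * Real.sqrt n, 0, 0]

/-- The 3×3 block `M_C̄^0`. -/
noncomputable def MCblk (γA γB m : ℝ) (n : ℕ) : Matrix (Fin 3) (Fin 3) ℝ :=
  !![γA, 0, 0; 0, 0, 0; 2 * m * Real.sqrt n, 0, γB]

/-- The `3C̄ × 3C̄` matrix `M^0`, indexed by (block index, within-block index):
its first block row is `(M_1^0, M_2^0, …, M_2^0, M_C̄^0)`, the blocks in positions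
`(i+1, i)` are the 3×3 identity, and all other blocks are zero. -/
noncomputable def M0mat (Cb : ℕ) (γA γB m : ℝ) (n : ℕ) :
    Matrix (Fin Cb × Fin 3) (Fin Cb × Fin 3) ℝ :=
  fun q r =>
    if q.1.val = 0 then
      (if r.1.val = 0 then M1blk m n
       else if r.1.val = Cb - 1 then MCblk γA γB m n
       else M2blk m n) q.2 r.2
    else if q.1.val = r.1.val + 1 then (1 : Matrix (Fin 3) (Fin 3) ℝ) q.2 r.2
    else 0


open Polynomial Finset

-- entries are lower triangular in the second coordinate
lemma M0_lower (Cb : ℕ) (γA γB m : ℝ) (n : ℕ) (q p : Fin Cb × Fin 3) (h : q.2 < p.2) :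
    M0mat Cb γA γB m n q p = 0 := by
  obtain ⟨q1, q2⟩ := q
  obtain ⟨p1, p2⟩ := p
  simp only [M0mat]
  have h' : (q2 : ℕ) < (p2 : ℕ) := h
  split_ifs with h1 h2 h3 h4
  · fin_cases q2 <;> fin_cases p2 <;> simp_all [M1blk] <;> omega
  · fin_cases q2 <;> fin_cases p2 <;> simp_all [MCblk] <;> omega
  · fin_cases q2 <;> fin_cases p2 <;> simp_all [M2blk] <;> omega
  · have : q2 ≠ p2 := fun e => by subst e; omega
    exact Matrix.one_apply_ne this
  · rfl

def Lmat {R : Type*} [CommRing R] (k : ℕ) (x g : R) : Matrix (Fin (k+2)) (Fin (k+2)) R :=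
  Matrix.of fun i j =>
    if i = j then x else if (i : ℕ) = (j : ℕ) + 1 then -1
    else if (i : ℕ) = 0 ∧ (j : ℕ) = k + 1 then -g else 0

open Matrix Polynomial Finset

variable {R : Type*} [CommRing R]

/-- lower bidiagonal: diag x, subdiagonal -1 -/
def Tmat (nn : ℕ) (x : R) : Matrix (Fin nn) (Fin nn) R :=
  Matrix.of fun i j => if i = j then x else if (i : ℕ) = (j : ℕ) + 1 then -1 else 0

lemma Tmat_det (nn : ℕ) (x : R) : (Tmat nn x).det = x ^ nn := by
  rw [Matrix.det_of_lowerTriangular (Tmat nn x)]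
  · simp [Tmat]
  · intro i j h
    simp only [Tmat, Matrix.of_apply]
    have h1 : i ≠ j := by
      intro e; subst e; exact absurd h (lt_irrefl _)
    have h2 : (i : ℕ) ≠ (j : ℕ) + 1 := by
      have : (i : ℕ) < (j : ℕ) := h
      omega
    simp [h1, h2]

/-- matrix with row 0 = e_{last}, other rows = Tmat rows -/
lemma det_T_rowlast (k : ℕ) (x : R) :
    (Matrix.updateRow (Tmat (k+2) x) 0
      (fun j => if (j : ℕ) = k + 1 then 1 else 0)).det = (-1 : R) ^ (k+1) * (-1) ^ (k+1) := by
  rw [Matrix.det_succ_row_zero]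
  rw [Finset.sum_eq_single (Fin.last (k+1))]
  · simp only [Matrix.updateRow_self, Fin.val_last]
    rw [if_pos trivial]
    have hminor : ((Matrix.updateRow (Tmat (k+2) x) 0
        (fun j => if (j : ℕ) = k + 1 then 1 else 0)).submatrix Fin.succ
          (Fin.last (k+1)).succAbove).det = (-1 : R) ^ (k+1) := by
      rw [Matrix.det_of_upperTriangular]
      · have : ∀ i : Fin (k+1), (Matrix.updateRow (Tmat (k+2) x) 0
            (fun j => if (j : ℕ) = k + 1 then 1 else 0)).submatrix Fin.succ
            (Fin.last (k+1)).succAbove i i = -1 := by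
          intro i
          simp only [Matrix.submatrix_apply]
          rw [Matrix.updateRow_ne (by exact_mod_cast (Fin.succ_ne_zero i))]
          simp only [Tmat, Matrix.of_apply, Fin.succAbove_last, Fin.val_succ, Fin.coe_castSucc]
          rw [if_neg, if_pos trivial]
          · intro e
            have : (i : ℕ) + 1 = (i : ℕ) := by
              simpa using congrArg Fin.val e
            omega
        rw [Finset.prod_congr rfl (fun i _ => this i)]
        simp
      · intro i j h
        simp only [Matrix.submatrix_apply]
        rw [Matrix.updateRow_ne (by exact_mod_cast (Fin.succ_ne_zero i))]
        simp only [Tmat, Matrix.of_apply, Fin.succAbove_last, Fin.val_succ, Fin.coe_castSucc]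
        have h' : (j : ℕ) < (i : ℕ) := h
        rw [if_neg, if_neg]
        · omega
        · intro e
          have : (i : ℕ) + 1 = (j : ℕ) := by simpa using congrArg Fin.val e
          omega
    rw [hminor]
    ring
  · intro j _ hj
    simp only [Matrix.updateRow_self]
    rw [if_neg, mul_zero, zero_mul]
    intro e
    apply hj
    exact Fin.ext e
  · simp


lemma Lmat_det (k : ℕ) (x g : R) : (Lmat k x g).det = x ^ (k+2) - g := by
  have hrow : Lmat k x g = Matrix.updateRow (Tmat (k+2) x) 0
      (Tmat (k+2) x 0 + (-g) • (fun j' : Fin (k+2) => if (j' : ℕ) = k + 1 then (1:R) else 0)) := by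
    ext i j
    rcases eq_or_ne i 0 with hi | hi
    · subst hi
      rw [Matrix.updateRow_self]
      simp only [Lmat, Tmat, Matrix.of_apply, Pi.add_apply, Pi.smul_apply, smul_eq_mul]
      have h2 : ¬ ((0:Fin (k+2)) : ℕ) = (j : ℕ) + 1 := by simp
      rcases eq_or_ne (0 : Fin (k+2)) j with hj | hj
      · have : ¬ ((j:ℕ) = k + 1) := by
          have : (j : ℕ) = 0 := by simpa using (congrArg Fin.val hj).symm
          omega
        simp [hj, h2, this]
      · rcases eq_or_ne ((j:ℕ)) (k+1) with hl | hl
        · simp [hj, h2, hl]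
        · simp [hj, h2, hl]
    · rw [Matrix.updateRow_ne hi]
      simp only [Lmat, Tmat, Matrix.of_apply]
      have : ¬ ((i : ℕ) = 0 ∧ (j : ℕ) = k + 1) := by
        intro ⟨h1, _⟩; exact hi (Fin.ext h1)
      rcases eq_or_ne i j with h | h
      · simp [h]
      · rcases eq_or_ne ((i:ℕ)) ((j:ℕ)+1) with h2 | h2 <;> simp [h, h2, this, hi]
  rw [hrow, Matrix.det_updateRow_add, Matrix.updateRow_eq_self, Tmat_det,
    Matrix.det_updateRow_smul, det_T_rowlast]
  ring_nf
  rw [Even.neg_one_pow ⟨k, by ring⟩]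
  ring

lemma blk0 (k : ℕ) (γA γB m : ℝ) (n : ℕ) :
    (Matrix.of fun i j : Fin (k+2) =>
      charmatrix ((M0mat (k+2) γA γB m n).map (Complex.ofReal)) (i, (0:Fin 3)) (j, (0:Fin 3)))
      = Lmat k (X : ℂ[X]) (C (γA:ℂ)) := by
  ext i j : 2
  rw [Matrix.of_apply, Lmat, Matrix.of_apply]
  by_cases hij : i = j
  · subst hij
    rw [charmatrix_apply_eq, if_pos rfl]
    have hz : M0mat (k+2) γA γB m n (i,0) (i,0) = 0 := by
      simp only [M0mat]
      split_ifs <;> first | rfl | (exfalso; omega) | simp [M1blk]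
    simp [Matrix.map_apply, hz]
  · have hne : ((i,(0:Fin 3))) ≠ ((j,(0:Fin 3))) := fun e => hij (congrArg Prod.fst e)
    rw [charmatrix_apply_ne _ _ _ hne, if_neg hij, Matrix.map_apply]
    simp only [M0mat]
    split_ifs <;>
      first
        | rfl
        | (exfalso; omega)
        | simp [M1blk, M2blk, MCblk, Matrix.one_apply, Matrix.cons_val_zero,
            Matrix.cons_val_one, Matrix.head_cons, Matrix.vecHead, Matrix.vecTail]

lemma blk2 (k : ℕ) (γA γB m : ℝ) (n : ℕ) :
    (Matrix.of fun i j : Fin (k+2) =>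
      charmatrix ((M0mat (k+2) γA γB m n).map (Complex.ofReal)) (i, (2:Fin 3)) (j, (2:Fin 3)))
      = Lmat k (X : ℂ[X]) (C (γB:ℂ)) := by
  ext i j : 2
  rw [Matrix.of_apply, Lmat, Matrix.of_apply]
  by_cases hij : i = j
  · subst hij
    rw [charmatrix_apply_eq, if_pos rfl]
    have hz : M0mat (k+2) γA γB m n (i,2) (i,2) = 0 := by
      simp only [M0mat]
      split_ifs <;> first | rfl | (exfalso; omega) | simp [M1blk]
    simp [Matrix.map_apply, hz]
  · have hne : ((i,(2:Fin 3))) ≠ ((j,(2:Fin 3))) := fun e => hij (congrArg Prod.fst e)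
    rw [charmatrix_apply_ne _ _ _ hne, if_neg hij, Matrix.map_apply]
    simp only [M0mat]
    split_ifs <;>
      first
        | rfl
        | (exfalso; omega)
        | simp [M1blk, M2blk, MCblk, Matrix.one_apply, Matrix.cons_val_zero,
            Matrix.cons_val_one, Matrix.head_cons, Matrix.vecHead, Matrix.vecTail]

lemma blk1_det (k : ℕ) (γA γB m : ℝ) (n : ℕ) :
    (Matrix.of fun i j : Fin (k+2) =>
      charmatrix ((M0mat (k+2) γA γB m n).map (Complex.ofReal)) (i, (1:Fin 3)) (j, (1:Fin 3))).det
      = (X - 1) * X ^ (k+1) := by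
  rw [Matrix.det_of_lowerTriangular]
  · have h0 : (Matrix.of fun i j : Fin (k+2) =>
        charmatrix ((M0mat (k+2) γA γB m n).map (Complex.ofReal)) (i, (1:Fin 3)) (j, (1:Fin 3)))
        0 0 = X - 1 := by
      rw [Matrix.of_apply, charmatrix_apply_eq, Matrix.map_apply]
      have h1 : M0mat (k+2) γA γB m n (0,1) (0,1) = 1 := by
        simp [M0mat, M1blk]
      rw [h1]
      simp
    have hs : ∀ i : Fin (k+1), (Matrix.of fun i j : Fin (k+2) =>
        charmatrix ((M0mat (k+2) γA γB m n).map (Complex.ofReal)) (i, (1:Fin 3)) (j, (1:Fin 3)))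
        i.succ i.succ = X := by
      intro i
      rw [Matrix.of_apply, charmatrix_apply_eq, Matrix.map_apply]
      have h1 : M0mat (k+2) γA γB m n (i.succ,1) (i.succ,1) = 0 := by
        simp only [M0mat]
        split_ifs <;> first | rfl | (exfalso; simp_all [Fin.val_succ]) | (exfalso; omega)
      rw [h1]
      simp
    rw [Fin.prod_univ_succ, h0]
    rw [Finset.prod_congr rfl (fun i _ => hs i)]
    simp
  · intro i j h
    have h' : (i : ℕ) < (j : ℕ) := h
    have hij : i ≠ j := fun e => by subst e; omega
    have hne : ((i,(1:Fin 3))) ≠ ((j,(1:Fin 3))) := fun e => hij (congrArg Prod.fst e)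
    rw [Matrix.of_apply, charmatrix_apply_ne _ _ _ hne, Matrix.map_apply]
    have h1 : M0mat (k+2) γA γB m n (i,1) (j,1) = 0 := by
      simp only [M0mat]
      split_ifs <;>
        first
          | rfl
          | (exfalso; omega)
          | simp [M1blk, M2blk, MCblk, Matrix.cons_val_zero, Matrix.cons_val_one,
              Matrix.head_cons, Matrix.vecHead, Matrix.vecTail]
    rw [h1]
    simp

def eBlk (k : ℕ) (a : Fin 3) : Fin (k+2) ≃ {q : Fin (k+2) × Fin 3 // Prod.snd q = a} where
  toFun i := ⟨(i, a), rfl⟩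
  invFun q := q.1.1
  left_inv i := rfl
  right_inv q := by
    obtain ⟨⟨q1, q2⟩, hq⟩ := q
    cases hq
    rfl

lemma charpoly_M0 (k : ℕ) (γA γB m : ℝ) (n : ℕ) :
    ((M0mat (k+2) γA γB m n).map Complex.ofReal).charpoly =
      ((X:ℂ[X])^(k+2) - C (γA:ℂ)) * ((X - 1) * X^(k+1)) * (X^(k+2) - C (γB:ℂ)) := by
  set N := (M0mat (k+2) γA γB m n).map Complex.ofReal with hN
  have hbt : ((charmatrix N)ᵀ).BlockTriangular Prod.snd := by
    intro p q hlt
    rw [Matrix.transpose_apply]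
    have hne : q ≠ p := fun e => absurd hlt (by rw [e]; exact lt_irrefl _)
    rw [charmatrix_apply_ne _ _ _ hne, hN, Matrix.map_apply, M0_lower _ _ _ _ _ _ _ hlt]
    simp
  have hblock : ∀ a : Fin 3, (((charmatrix N)ᵀ).toSquareBlock Prod.snd a).det =
      (Matrix.of fun i j : Fin (k+2) => charmatrix N (i, a) (j, a)).det := by
    intro a
    have hsub : ((((charmatrix N)ᵀ).toSquareBlock Prod.snd a).submatrix (eBlk k a) (eBlk k a))
        = (Matrix.of fun i j : Fin (k+2) => charmatrix N (i, a) (j, a))ᵀ := rfl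
    rw [← Matrix.det_submatrix_equiv_self (eBlk k a), hsub, Matrix.det_transpose]
  rw [Matrix.charpoly, ← Matrix.det_transpose, hbt.det_fintype, Fin.prod_univ_three,
    hblock 0, hblock 1, hblock 2, blk0, blk1_det, blk2, Lmat_det, Lmat_det]

/-- The spectral radius of `M^0` equals `1`: every complex eigenvalue of `M^0` has modulus
at most `1`, `1` is an eigenvalue, and `λ = 1` is a simple eigenvalue, i.e. a root of the
characteristic polynomial of algebraic multiplicity one. -/
theorem stmt3 (Cb n : ℕ) (hCb : 2 ≤ Cb) (hn : 1 ≤ n) (γA γB m : ℝ)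
    (hγA : γA ∈ Set.Ioo (0 : ℝ) 1) (hγB : γB ∈ Set.Ioo (0 : ℝ) 1) :
    (∀ z : ℂ, ((M0mat Cb γA γB m n).map Complex.ofReal).charpoly.IsRoot z →
        ‖z‖ ≤ 1) ∧
      ((M0mat Cb γA γB m n).map Complex.ofReal).charpoly.IsRoot 1 ∧
      ((M0mat Cb γA γB m n).map Complex.ofReal).charpoly.rootMultiplicity 1 = 1 := by
  obtain ⟨k, rfl⟩ : ∃ k, Cb = k + 2 := ⟨Cb - 2, by omega⟩
  rw [charpoly_M0]
  obtain ⟨hA0, hA1⟩ := hγA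
  obtain ⟨hB0, hB1⟩ := hγB
  have habs : ∀ (γ : ℝ) (z : ℂ), 0 < γ → γ < 1 → z ^ (k+2) - (γ:ℂ) = 0 →
      ‖z‖ ≤ 1 := by
    intro γ z hg0 hg1 hz
    by_contra hgt
    push_neg at hgt
    have h1 : ‖z‖ ^ (k+2) = γ := by
      rw [← norm_pow, sub_eq_zero.mp hz, Complex.norm_real, Real.norm_of_nonneg hg0.le]
    have h2 : (1:ℝ) < ‖z‖ ^ (k+2) := one_lt_pow₀ hgt (by omega)
    linarith
  refine ⟨?_, ?_, ?_⟩
  · intro z hz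
    simp only [Polynomial.IsRoot, Polynomial.eval_mul, Polynomial.eval_sub,
      Polynomial.eval_pow, Polynomial.eval_X, Polynomial.eval_C, Polynomial.eval_one,
      mul_eq_zero] at hz
    rcases hz with (hz | hz) | hz
    · exact habs γA z hA0 hA1 hz
    · rcases hz with hz | hz
      · have : z = 1 := by linear_combination hz
        simp [this]
      · have : z = 0 := pow_eq_zero_iff (by omega) |>.mp hz
        simp [this]
    · exact habs γB z hB0 hB1 hz
  · simp [Polynomial.IsRoot]
  · have hXC : ((X : ℂ[X]) - 1) = X - C 1 := by rw [Polynomial.C_1]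
    have hne1 : ((X:ℂ[X])^(k+2) - C (γA:ℂ)) ≠ 0 := Polynomial.X_pow_sub_C_ne_zero (by omega) _
    have hne2 : ((X:ℂ[X]) - 1) ≠ 0 := by
      rw [hXC]; exact Polynomial.X_sub_C_ne_zero _
    have hne3 : ((X:ℂ[X])^(k+1)) ≠ 0 := pow_ne_zero _ Polynomial.X_ne_zero
    have hne4 : ((X:ℂ[X])^(k+2) - C (γB:ℂ)) ≠ 0 := Polynomial.X_pow_sub_C_ne_zero (by omega) _
    have hrA : Polynomial.rootMultiplicity 1 ((X:ℂ[X])^(k+2) - C (γA:ℂ)) = 0 := by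
      apply Polynomial.rootMultiplicity_eq_zero
      simp only [Polynomial.IsRoot, Polynomial.eval_sub, Polynomial.eval_pow,
        Polynomial.eval_X, Polynomial.eval_C, one_pow]
      intro h
      have : (γA:ℂ) = 1 := by linear_combination -h
      exact absurd (Complex.ofReal_eq_one.mp this) (by linarith)
    have hrB : Polynomial.rootMultiplicity 1 ((X:ℂ[X])^(k+2) - C (γB:ℂ)) = 0 := by
      apply Polynomial.rootMultiplicity_eq_zero
      simp only [Polynomial.IsRoot, Polynomial.eval_sub, Polynomial.eval_pow,
        Polynomial.eval_X, Polynomial.eval_C, one_pow]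
      intro h
      have : (γB:ℂ) = 1 := by linear_combination -h
      exact absurd (Complex.ofReal_eq_one.mp this) (by linarith)
    have hrX : Polynomial.rootMultiplicity 1 ((X:ℂ[X])^(k+1)) = 0 := by
      apply Polynomial.rootMultiplicity_eq_zero
      simp [Polynomial.IsRoot]
    have hr1 : Polynomial.rootMultiplicity 1 ((X:ℂ[X]) - 1) = 1 := by
      rw [hXC]; exact Polynomial.rootMultiplicity_X_sub_C_self
    rw [Polynomial.rootMultiplicity_mul (mul_ne_zero (mul_ne_zero hne1 (mul_ne_zero hne2 hne3)) hne4),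
      Polynomial.rootMultiplicity_mul (mul_ne_zero hne1 (mul_ne_zero hne2 hne3)),
      Polynomial.rootMultiplicity_mul (mul_ne_zero hne2 hne3),
      hrA, hrB, hrX, hr1]
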